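/- With the signature cancellation rule: if w is a word in {+, −} and w' is obtained from w by changing the leftmost uncanceled − into a +, then the uncanceled symbols of w' are exactly those of w with that − replaced by +; in particular the number of uncanceled − symbols of w' is one less than that of w, and the number of uncanceled + symbols is one more. -/

import Mathlib

/-- Symbols of a signature word. -/
inductive PMSym | plus | minus | blank
deriving DecidableEq, Repr

/-- Signature reduction keeping positions: blanks are dropped and adjacent `-+` pairs cancel;
the result lists the uncanceled symbols together with their positions and has the
form `+ ⋯ + - ⋯ -`. -/
def redIdx : List (ℕ × PMSym) → List (ℕ × PMSym)
  | [] => []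
  | p :: xs =>
    let r := redIdx xs
    match p.2 with
    | PMSym.blank => r
    | PMSym.plus => p :: r
    | PMSym.minus =>
      match r with
      | q :: r' => if q.2 = PMSym.plus then r' else p :: r
      | [] => [p]

/-- One step of signature reduction: `(p, m) = (#uncanceled +, #uncanceled -)` so far. -/
def sigStep : ℕ × ℕ → PMSym → ℕ × ℕ
  | (p, m), PMSym.plus => if 0 < m then (p, m - 1) else (p + 1, m)
  | (p, m), PMSym.minus => (p, m + 1)
  | (p, m), PMSym.blank => (p, m)

/-- `sig w = (φ, ε)`: the numbers of uncanceled `+` and `-` symbols of `w`. -/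
def sig (w : List PMSym) : ℕ × ℕ := w.foldl sigStep (0, 0)

def rstep (p : ℕ × PMSym) (r : List (ℕ × PMSym)) : List (ℕ × PMSym) :=
  match p.2 with
  | PMSym.blank => r
  | PMSym.plus => p :: r
  | PMSym.minus =>
    match r with
    | q :: r' => if q.2 = PMSym.plus then r' else p :: r
    | [] => [p]

lemma redIdx_eq_foldr (l : List (ℕ × PMSym)) : redIdx l = l.foldr rstep [] := by
  induction l with
  | nil => rfl
  | cons p xs ih => rw [List.foldr_cons, ← ih]; rfl

lemma foldr_rstep_sublist : ∀ (A s : List (ℕ × PMSym)), (A.foldr rstep s).Sublist (A ++ s)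
  | [], s => by simp
  | a :: A, s => by
    have ih := foldr_rstep_sublist A s
    rw [List.foldr_cons, List.cons_append]
    rcases a with ⟨i, x⟩
    cases x with
    | blank => exact ih.trans (List.sublist_cons_self _ _)
    | plus => exact ih.cons₂ _
    | minus =>
      rcases h : A.foldr rstep s with _ | ⟨q, r'⟩
      · simpa [rstep, h] using List.sublist_cons_self _ _ |>.cons₂ _
        |>.trans (by simp)
      · by_cases hq : q.2 = PMSym.plus
        · simp only [rstep, h, if_pos hq]
          exact ((List.sublist_cons_self q r').trans (h ▸ ih)).trans
            (List.sublist_cons_self _ _)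
        · simp only [rstep, h, if_neg hq]
          exact (h ▸ ih).cons₂ _

lemma mem_foldr_rstep {p : ℕ × PMSym} {A s : List (ℕ × PMSym)}
    (h : p ∈ A.foldr rstep s) : p ∈ A ∨ p ∈ s := by
  have := (foldr_rstep_sublist A s).mem h
  simpa using this

lemma fix_map {k : ℕ} {l : List (ℕ × PMSym)} (h : ∀ q ∈ l, q.1 ≠ k) :
    l.map (fun p => if p.1 = k then (k, PMSym.plus) else p) = l := by
  induction l with
  | nil => rfl
  | cons a l ih =>
    simp only [List.map_cons, if_neg (h a (by simp)), ih (fun q hq => h q (by simp [hq]))]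

lemma rstep_blank (i : ℕ) (l : List (ℕ × PMSym)) : rstep (i, PMSym.blank) l = l := rfl
lemma rstep_plus (i : ℕ) (l : List (ℕ × PMSym)) :
    rstep (i, PMSym.plus) l = (i, PMSym.plus) :: l := rfl
lemma rstep_minus_nil (i : ℕ) : rstep (i, PMSym.minus) [] = [(i, PMSym.minus)] := rfl
lemma rstep_minus_cons (i : ℕ) (q : ℕ × PMSym) (r : List (ℕ × PMSym)) :
    rstep (i, PMSym.minus) (q :: r)
      = if q.2 = PMSym.plus then r else (i, PMSym.minus) :: q :: r := rfl

lemma key (k : ℕ) : ∀ (A m : List (ℕ × PMSym)),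
    (∀ p ∈ A, p.1 ≠ k) → (∀ q ∈ m, q.1 ≠ k) →
    (A.foldr rstep ((k, PMSym.minus) :: m)).find? (fun p => p.2 == PMSym.minus)
      = some (k, PMSym.minus) →
    A.foldr rstep ((k, PMSym.plus) :: m)
      = (A.foldr rstep ((k, PMSym.minus) :: m)).map
          (fun p => if p.1 = k then (k, PMSym.plus) else p)
  | [], m, hA, hm, hf => by
    simp only [List.foldr_nil, List.map_cons, if_pos, fix_map hm]
  | a :: A, m, hA, hm, hf => by
    have hA' : ∀ p ∈ A, p.1 ≠ k := fun p hp => hA p (by simp [hp])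
    have ha : a.1 ≠ k := hA a (by simp)
    rw [List.foldr_cons] at hf ⊢
    rw [List.foldr_cons]
    rcases a with ⟨i, x⟩
    simp only at ha
    cases x with
    | blank =>
      rw [rstep_blank] at hf ⊢
      rw [rstep_blank]
      exact key k A m hA' hm hf
    | plus =>
      rw [rstep_plus] at hf ⊢
      rw [rstep_plus]
      rw [List.find?_cons_of_neg (by simp)] at hf
      rw [key k A m hA' hm hf, List.map_cons, if_neg ha]
    | minus =>
      rcases h : A.foldr rstep ((k, PMSym.minus) :: m) with _ | ⟨q, r₂⟩
      · exfalso
        rw [h, rstep_minus_nil, List.find?_cons_of_pos (by simp)] at hf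
        exact ha (by simpa using congrArg (fun o => (o.getD (0, PMSym.blank)).1) hf)
      · by_cases hq : q.2 = PMSym.plus
        · have hf' : (A.foldr rstep ((k, PMSym.minus) :: m)).find?
              (fun p => p.2 == PMSym.minus) = some (k, PMSym.minus) := by
            rw [h, List.find?_cons_of_neg (by simp [hq])]
            rw [h, rstep_minus_cons, if_pos hq] at hf
            exact hf
          have ihh := key k A m hA' hm hf'
          have hqk : q.1 ≠ k := by
            have hqmem : q ∈ A.foldr rstep ((k, PMSym.minus) :: m) := by rw [h]; simp
            rcases mem_foldr_rstep hqmem with h1 | h1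
            · exact hA' q h1
            · rcases List.mem_cons.1 h1 with h2 | h2
              · exfalso; rw [h2] at hq; simp at hq
              · exact hm q h2
          rw [ihh, h, List.map_cons, if_neg hqk, rstep_minus_cons, if_pos hq,
            rstep_minus_cons, if_pos hq]
        · exfalso
          rw [h, rstep_minus_cons, if_neg hq,
            List.find?_cons_of_pos (by simp)] at hf
          exact ha (by simpa using congrArg (fun o => (o.getD (0, PMSym.blank)).1) hf)

/-- If `w'` is obtained from a word `w` in `{+, -}` by changing the leftmost uncanceled `-`
(at position `k`) into a `+`, then the uncanceled symbols of `w'` are exactly those of `w`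
with that `-` replaced by `+`; in particular the number of uncanceled `-` symbols drops
by one and the number of uncanceled `+` symbols rises by one. -/
theorem stmt6 (w : List PMSym) (hb : PMSym.blank ∉ w) (k : ℕ)
    (hk : (redIdx (w.zipIdx.map Prod.swap)).find? (fun p => p.2 == PMSym.minus) = some (k, PMSym.minus)) :
    redIdx (((w.set k PMSym.plus).zipIdx.map Prod.swap)) =
      (redIdx (w.zipIdx.map Prod.swap)).map (fun p => if p.1 = k then (k, PMSym.plus) else p) ∧
    ((redIdx (((w.set k PMSym.plus).zipIdx.map Prod.swap))).filter (fun p => p.2 == PMSym.minus)).length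
      = ((redIdx (w.zipIdx.map Prod.swap)).filter (fun p => p.2 == PMSym.minus)).length - 1 ∧
    ((redIdx (((w.set k PMSym.plus).zipIdx.map Prod.swap))).filter (fun p => p.2 == PMSym.plus)).length
      = ((redIdx (w.zipIdx.map Prod.swap)).filter (fun p => p.2 == PMSym.plus)).length + 1 := by
  classical
  have hsub : (redIdx (w.zipIdx.map Prod.swap)).Sublist (w.zipIdx.map Prod.swap) := by
    rw [redIdx_eq_foldr]
    simpa using foldr_rstep_sublist (w.zipIdx.map Prod.swap) []
  have hmem : (k, PMSym.minus) ∈ redIdx (w.zipIdx.map Prod.swap) := List.mem_of_find?_eq_some hk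
  obtain ⟨⟨x0, i0⟩, hxi, he0⟩ := List.mem_map.1 (hsub.mem hmem)
  simp only [Prod.swap_prod_mk, Prod.mk.injEq] at he0
  rw [he0.1, he0.2] at hxi
  obtain ⟨hklt, hwk⟩ := List.mem_zipIdx' hxi
  set u := w.take k with hu_def
  set v := w.drop (k + 1) with hv_def
  have hu : u.length = k := by
    rw [hu_def, List.length_take]; omega
  have hw : w = u ++ PMSym.minus :: v := by
    conv_lhs => rw [← List.take_append_drop k w]
    rw [List.drop_eq_getElem_cons hklt, hwk]
  have hset : w.set k PMSym.plus = u ++ PMSym.plus :: v := by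
    rw [List.set_eq_take_append_cons_drop, if_pos hklt]
  have henum : ∀ s : PMSym,
      ((u ++ s :: v).zipIdx.map Prod.swap) = (u.zipIdx.map Prod.swap) ++ (k, s) :: ((v.zipIdx (k + 1)).map Prod.swap) := by
    intro s
    rw [List.zipIdx_append, hu, Nat.zero_add, List.zipIdx_cons, List.map_append, List.map_cons]
    rfl
  set B := (v.zipIdx (k + 1)).map Prod.swap with hB_def
  have hA : ∀ p ∈ (u.zipIdx.map Prod.swap), p.1 ≠ k := by
    rintro ⟨i, x⟩ hp
    obtain ⟨⟨y, j⟩, hj, he⟩ := List.mem_map.1 hp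
    simp only [Prod.swap_prod_mk, Prod.mk.injEq] at he
    obtain ⟨he1, -⟩ := he
    have := (List.mem_zipIdx' hj).1
    omega
  have hBk : ∀ p ∈ B, p.1 ≠ k := by
    rintro ⟨i, x⟩ hp
    obtain ⟨⟨y, j⟩, hj, he⟩ := List.mem_map.1 hp
    simp only [Prod.swap_prod_mk, Prod.mk.injEq] at he
    obtain ⟨he1, -⟩ := he
    have := (List.mem_zipIdx hj).1
    omega
  set rB := B.foldr rstep [] with hrB_def
  have hmB : ∀ q ∈ rB, q.1 ≠ k := by
    intro q hq
    rcases mem_foldr_rstep hq with h1 | h1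
    · exact hBk q h1
    · simp at h1
  have hR : redIdx (w.zipIdx.map Prod.swap) = (u.zipIdx.map Prod.swap).foldr rstep (rstep (k, PMSym.minus) rB) := by
    conv_lhs => rw [hw]
    rw [henum, redIdx_eq_foldr, List.foldr_append, List.foldr_cons]
  have hstep : rstep (k, PMSym.minus) rB = (k, PMSym.minus) :: rB := by
    rcases hc : rB with _ | ⟨q, r₂⟩
    · rfl
    · rw [rstep_minus_cons]
      by_cases hq : q.2 = PMSym.plus
      · exfalso
        rw [hR, hc, rstep_minus_cons, if_pos hq] at hmem
        rcases mem_foldr_rstep hmem with h1 | h1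
        · exact hA _ h1 rfl
        · have : (k, PMSym.minus) ∈ rB := by rw [hc]; simp [h1]
          exact hmB _ this rfl
      · rw [if_neg hq]
  have hfind : ((u.zipIdx.map Prod.swap).foldr rstep ((k, PMSym.minus) :: rB)).find?
      (fun p => p.2 == PMSym.minus) = some (k, PMSym.minus) := by
    rw [← hstep, ← hR]; exact hk
  have hkey := key k (u.zipIdx.map Prod.swap) rB hA hmB hfind
  have first : redIdx ((w.set k PMSym.plus).zipIdx.map Prod.swap) =
      (redIdx (w.zipIdx.map Prod.swap)).map (fun p => if p.1 = k then (k, PMSym.plus) else p) := by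
    rw [hset, henum, redIdx_eq_foldr, List.foldr_append, List.foldr_cons, ← hrB_def,
      rstep_plus, hkey, ← hstep, ← hR]
  refine ⟨first, ?_⟩
  obtain ⟨-, as, bs, hsplit, hall⟩ := List.find?_eq_some_iff_append.1 hk
  have hnd : ((redIdx (w.zipIdx.map Prod.swap)).map Prod.fst).Nodup := by
    refine (hsub.map Prod.fst).nodup ?_
    rw [List.map_map, show Prod.fst ∘ Prod.swap = (Prod.snd : PMSym × ℕ → ℕ) from rfl,
      List.zipIdx_map_snd]
    exact List.nodup_range' ..
  rw [hsplit] at hnd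
  simp only [List.map_append, List.map_cons, List.nodup_append, List.nodup_cons] at hnd
  have has : ∀ a ∈ as, a.1 ≠ k := by
    intro a ha hak
    exact hnd.2.2 _ (List.mem_map_of_mem (f := Prod.fst) ha) a.1 (by simp [hak]) rfl
  have hbs : ∀ a ∈ bs, a.1 ≠ k := by
    intro a ha hak
    exact hnd.2.1.1 (hak ▸ List.mem_map_of_mem (f := Prod.fst) ha)
  have hmap : (redIdx (w.zipIdx.map Prod.swap)).map (fun p => if p.1 = k then (k, PMSym.plus) else p)
      = as ++ (k, PMSym.plus) :: bs := by
    rw [hsplit, List.map_append, List.map_cons, fix_map has, fix_map hbs, if_pos rfl]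
  have hasnil : as.filter (fun p => p.2 == PMSym.minus) = [] :=
    List.filter_eq_nil_iff.2 (fun a ha => by simpa using hall a ha)
  rw [first, hmap, hsplit]
  constructor
  · simp [List.filter_append, List.filter_cons, hasnil]
  · simp [List.filter_append, List.filter_cons, hasnil]
    omega
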